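/- arXiv:2008.12000 — 2 statements merged into one kernel-verified Lean document; each statement's English description precedes it below -/
import Mathlib

section
/- Let n ≥ 1, let λ = (λ₁ ≥ ⋯ ≥ λ_n ≥ 0) and μ = (μ₁ ≥ ⋯ ≥ μ_n ≥ 0) be partitions such that μ_k > λ_k for some k. For each pair (i,j) with 1 ≤ i,j ≤ n let M_{i,j} = e_{λ_i − i − μ_j + j}(v_{i,j}) for arbitrary finite lists of variables v_{i,j} over a commutative ring, where e_m = 0 for m < 0. Then det(M) = 0. -/
/-- `esym k l` is the k-th elementary symmetric polynomial of the entries of `l`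
(with `esym 0 l = 1`). -/
def esym {R : Type*} [CommRing R] : ℕ → List R → R
  | 0, _ => 1
  | _ + 1, [] => 0
  | k + 1, a :: l => esym (k + 1) l + a * esym k l
  termination_by k l => (l.length, k)

/-- `hsym k l` is the k-th complete homogeneous symmetric polynomial of the entries
of `l` (with `hsym 0 l = 1`). -/
def hsym {R : Type*} [CommRing R] : ℕ → List R → R
  | 0, _ => 1
  | _ + 1, [] => 0
  | k + 1, a :: l => hsym (k + 1) l + a * hsym k (a :: l)
  termination_by k l => (k, l.length)

/-- elementary symmetric polynomial with integer index: 0 in negative degrees. -/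
def esymZ {R : Type*} [CommRing R] (k : ℤ) (l : List R) : R :=
  if 0 ≤ k then esym k.toNat l else 0

/-- complete homogeneous symmetric polynomial with integer index: 0 in negative degrees. -/
def hsymZ {R : Type*} [CommRing R] (k : ℤ) (l : List R) : R :=
  if 0 ≤ k then hsym k.toNat l else 0

/-- `seg f a b = [f (a+1), ..., f b]`, the empty list if `b ≤ a`. -/
def seg {R : Type*} [CommRing R] (f : ℕ → R) (a b : ℕ) : List R :=
  (List.range (b - a)).map fun m => f (a + 1 + m)
/-- If λ, μ are partitions with n parts (n ≥ 1) and μ_k > λ_k for some k, the matrix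
whose (i,j) entry is e_{λ_i − i − μ_j + j} in an arbitrary list of variables v_{i,j}
(e of negative index is 0) has determinant 0. -/
theorem det_esym_not_contained_eq_zero {R : Type*} [CommRing R] (n : ℕ) (hn : 1 ≤ n)
    (lam μ : Fin n → ℕ)
    (hlam : ∀ i j : Fin n, i ≤ j → lam j ≤ lam i)
    (hμ : ∀ i j : Fin n, i ≤ j → μ j ≤ μ i)
    (hne : ∃ k : Fin n, lam k < μ k)
    (v : Fin n → Fin n → List R) :
    Matrix.det (fun i j : Fin n =>
      esymZ ((lam i : ℤ) - (i.val + 1) - (μ j : ℤ) + (j.val + 1)) (v i j)) = 0 := by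
  obtain ⟨k, hk⟩ := hne
  have hzero : ∀ i j : Fin n, k ≤ i → j ≤ k →
      esymZ ((lam i : ℤ) - (i.val + 1) - (μ j : ℤ) + (j.val + 1)) (v i j) = 0 := by
    intro i j hki hjk
    have h1 : lam i ≤ lam k := hlam k i hki
    have h2 : μ k ≤ μ j := hμ j k hjk
    have hji : (j : ℕ) ≤ i := le_trans hjk hki
    rw [esymZ, if_neg]
    push_cast
    omega
  rw [Matrix.det_apply (M := fun i j : Fin n =>
      esymZ ((lam i : ℤ) - (i.val + 1) - (μ j : ℤ) + (j.val + 1)) (v i j))]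
  apply Finset.sum_eq_zero
  intro σ _
  have hex : ∃ j : Fin n, j ≤ k ∧ k ≤ σ j := by
    by_contra h
    push_neg at h
    have hcard : (Finset.Iic k).card ≤ (Finset.Iio k).card := by
      apply Finset.card_le_card_of_injOn σ
      · intro j hj
        exact Finset.mem_Iio.mpr (h j (Finset.mem_Iic.mp hj))
      · exact σ.injective.injOn
    rw [Fin.card_Iic, Fin.card_Iio] at hcard
    omega
  obtain ⟨j, hj1, hj2⟩ := hex
  have : (∏ i, esymZ ((lam (σ i) : ℤ) - ((σ i).val + 1) - (μ i : ℤ) + (i.val + 1)) (v (σ i) i)) = 0 :=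
    Finset.prod_eq_zero (Finset.mem_univ j) (hzero (σ j) j hj2 hj1)
  simp only [this, smul_zero]
end

section
/- Let α, β ∈ ℕⁿ satisfy α_i ≤ α_{i+1} + 1 and β_i ≤ β_{i+1} + 1 for all 1 ≤ i ≤ n−1, and let λ, μ be partitions with at most n parts. Suppose α_k ≥ β_k and μ_k < λ_k for some 1 ≤ k ≤ n. Then the n×n determinant det( e_{λ_i − μ_j − i + j}(x_{α_j+1},...,x_{β_i}, t_{μ_j+1},...,t_{λ_i −1}) )_{1≤i,j≤n} equals 0, where the list (x_{α_j+1},...,x_{β_i}) is empty if β_i ≤ α_j and the list (t_{μ_j+1},...,t_{λ_i−1}) is empty if μ_j ≥ λ_i − 1. -/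
/-- esym vanishes in degrees above the number of variables. -/
lemma esym_eq_zero_of_length_lt {R : Type*} [CommRing R] (m : ℕ) (l : List R)
    (h : l.length < m) : esym m l = 0 := by
  induction l generalizing m with
  | nil =>
    match m with
    | m + 1 => rw [esym]
  | cons a l ih =>
    match m with
    | m + 1 =>
      have h1 : l.length < m + 1 := by simp at h; omega
      have h2 : l.length < m := by simp at h; omega
      rw [esym, ih _ h1, ih _ h2]
      ring

lemma seg_length {R : Type*} [CommRing R] (f : ℕ → R) (a b : ℕ) :
    (seg f a b).length = b - a := by simp [seg]

/-- chain condition gives `f i ≤ f j + (j - i)` for `i ≤ j`. -/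
lemma chain_le {n : ℕ} (f : Fin n → ℕ)
    (hf : ∀ i j : Fin n, j.val = i.val + 1 → f i ≤ f j + 1) :
    ∀ (d : ℕ) (i j : Fin n), i ≤ j → j.val - i.val = d → f i ≤ f j + d := by
  intro d
  induction d with
  | zero =>
    intro i j hij hd
    have : i = j := Fin.le_antisymm hij (by omega)
    subst this; simp
  | succ d ih =>
    intro i j hij hd
    have hi1 : i.val + 1 < n := by have := j.isLt; omega
    have h1 := hf i ⟨i.val + 1, hi1⟩ rfl
    have h2 := ih ⟨i.val + 1, hi1⟩ j (by simp [Fin.le_def]; omega) (by simp; omega)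
    omega

/-- Lemma E=0: if α, β ∈ ℕⁿ satisfy α_i ≤ α_{i+1}+1 and β_i ≤ β_{i+1}+1 for all i,
λ, μ are partitions with at most n parts, and α_k ≥ β_k, μ_k < λ_k for some k, then
det( e_{λ_i − μ_j − i + j}(x_{α_j+1},...,x_{β_i}, t_{μ_j+1},...,t_{λ_i−1}) ) = 0,
where the variable lists are empty when their index ranges are empty and e of negative
index is 0. -/
theorem det_flagged_esym_eq_zero {R : Type*} [CommRing R] (n : ℕ) (x t : ℕ → R)
    (α β lam μ : Fin n → ℕ)
    (hα : ∀ i j : Fin n, j.val = i.val + 1 → α i ≤ α j + 1)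
    (hβ : ∀ i j : Fin n, j.val = i.val + 1 → β i ≤ β j + 1)
    (hlam : ∀ i j : Fin n, i ≤ j → lam j ≤ lam i)
    (hμ : ∀ i j : Fin n, i ≤ j → μ j ≤ μ i)
    (k : Fin n) (hk : β k ≤ α k) (hk' : μ k < lam k) :
    Matrix.det (fun i j : Fin n =>
      esymZ ((lam i : ℤ) - (μ j : ℤ) - (i.val + 1) + (j.val + 1))
        (seg x (α j) (β i) ++ seg t (μ j) (lam i - 1))) = 0 := by
  set M : Matrix (Fin n) (Fin n) R := fun i j =>
    esymZ ((lam i : ℤ) - (μ j : ℤ) - (i.val + 1) + (j.val + 1))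
      (seg x (α j) (β i) ++ seg t (μ j) (lam i - 1)) with hM
  -- entries with row index ≤ k and column index ≥ k vanish
  have hzero : ∀ i j : Fin n, i.val ≤ k.val → k.val ≤ j.val → M i j = 0 := by
    intro i j hik hkj
    have hll : lam k ≤ lam i := hlam i k (Fin.le_def.mpr hik)
    have hmm : μ j ≤ μ k := hμ k j (Fin.le_def.mpr hkj)
    have hβi : β i ≤ β k + (k.val - i.val) :=
      chain_le β hβ (k.val - i.val) i k hik rfl
    have hαk : α k ≤ α j + (j.val - k.val) :=
      chain_le α hα (j.val - k.val) k j hkj rfl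
    have hlt : μ j < lam i := by omega
    have hlen : ((seg x (α j) (β i) ++ seg t (μ j) (lam i - 1)).length : ℤ) <
        (lam i : ℤ) - (μ j : ℤ) - (i.val + 1) + (j.val + 1) := by
      rw [List.length_append, seg_length, seg_length]
      have := i.isLt; have := j.isLt; have := k.isLt
      omega
    have hd : (0:ℤ) ≤ (lam i : ℤ) - (μ j : ℤ) - (i.val + 1) + (j.val + 1) := by
      have := (seg x (α j) (β i) ++ seg t (μ j) (lam i - 1)).length.cast_nonneg (α := ℤ)
      omega
    show esymZ _ _ = 0
    rw [esymZ, if_pos hd]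
    exact esym_eq_zero_of_length_lt _ _ (by omega)
  rw [Matrix.det_apply]
  refine Finset.sum_eq_zero fun σ _ => ?_
  -- pigeonhole: some column i ≥ k has σ i ≤ k
  have : ∃ i : Fin n, k.val ≤ i.val ∧ (σ i).val ≤ k.val := by
    by_contra hcon
    push_neg at hcon
    have hmaps : ∀ i ∈ Finset.Ici k, σ i ∈ Finset.Ioi k := by
      intro i hi
      rw [Finset.mem_Ici] at hi
      rw [Finset.mem_Ioi, Fin.lt_def]
      exact hcon i hi
    have hcard : (Finset.Ioi k).card < (Finset.Ici k).card := by
      rw [Fin.card_Ioi, Fin.card_Ici]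
      have := k.isLt; omega
    obtain ⟨a, _, b, _, hab, heq⟩ :=
      Finset.exists_ne_map_eq_of_card_lt_of_maps_to hcard hmaps
    exact hab (σ.injective heq)
  obtain ⟨i, hik, hki⟩ := this
  rw [Finset.prod_eq_zero (f := fun j => M (σ j) j) (Finset.mem_univ i) (hzero (σ i) i hki hik)]
  simp
end
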